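/- Let K be a field of characteristic 0, let (e_1, ..., e_s) be a non-increasing sequence of natural numbers satisfying the Pólya condition, and let S be a finite subset of K. If a_1, ..., a_s are chosen independently and uniformly at random from S, then the probability that the polynomials (x-a_1)^{e_1}, ..., (x-a_s)^{e_s} are linearly independent over K is at least 1 - s(s-1)/|S|. -/

import Mathlib

open Polynomial
open scoped Classical

private lemma count_lemma {K : Type*} [Field K] (n : ℕ) (S : Finset K) (D : ℕ) :
    ∀ (t : ℕ) (r : Fin t → K → (Fin n → K)),
      (∀ (i : Fin t) (W : Finset (Fin n → K)), W.card + (i : ℕ) + 1 ≤ t →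
        (S.filter (fun x => r i x ∈ Submodule.span K (W : Set (Fin n → K)))).card ≤ D) →
      (S.card - D) ^ t ≤
        ((Fintype.piFinset (fun _ : Fin t => S)).filter
          (fun a => LinearIndependent K (fun i => r i (a i)))).card := by
  intro t
  induction t with
  | zero =>
    intro r _
    refine Nat.one_le_iff_ne_zero.2 (Finset.card_ne_zero_of_mem (a := fun i : Fin 0 => i.elim0) ?_)
    refine Finset.mem_filter.2 ⟨Fintype.mem_piFinset.2 (fun i => i.elim0), linearIndependent_empty_type⟩
  | succ t ih =>
    intro r H
    set r' : Fin t → K → (Fin n → K) := fun j => r j.succ with hr'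
    have H' : ∀ (i : Fin t) (W : Finset (Fin n → K)), W.card + (i : ℕ) + 1 ≤ t →
        (S.filter (fun x => r' i x ∈ Submodule.span K (W : Set (Fin n → K)))).card ≤ D := by
      intro i W hW
      exact H i.succ W (by simp [Fin.val_succ]; omega)
    have ih' := ih r' H'
    set good : Finset (Fin t → K) :=
      (Fintype.piFinset (fun _ : Fin t => S)).filter
        (fun a => LinearIndependent K (fun i => r' i (a i))) with hgood
    set Sig : Finset ((_ : Fin t → K) × K) :=
      good.sigma (fun a' => S.filter
        (fun x => r 0 x ∉ Submodule.span K (Set.range (fun j => r' j (a' j))))) with hSig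
    have hSigcard : (S.card - D) ^ (t + 1) ≤ Sig.card := by
      rw [hSig, Finset.card_sigma]
      have hbound : ∀ a' ∈ good, S.card - D ≤
          (S.filter (fun x => r 0 x ∉ Submodule.span K (Set.range (fun j => r' j (a' j))))).card := by
        intro a' _
        have hW := H 0 (Finset.image (fun j => r' j (a' j)) Finset.univ)
          (by simpa using Nat.succ_le_succ (le_trans Finset.card_image_le (by simp)))
        have hcoe : ((Finset.image (fun j => r' j (a' j)) Finset.univ : Finset (Fin n → K)) : Set (Fin n → K))
            = Set.range (fun j => r' j (a' j)) := by
          simp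
        rw [hcoe] at hW
        have := Finset.card_filter_add_card_filter_not
          (s := S) (p := fun x => r 0 x ∈ Submodule.span K (Set.range (fun j => r' j (a' j))))
        omega
      calc (S.card - D) ^ (t + 1) = (S.card - D) ^ t * (S.card - D) := by ring
        _ ≤ good.card * (S.card - D) := Nat.mul_le_mul_right _ ih'
        _ = ∑ _a' ∈ good, (S.card - D) := by rw [Finset.sum_const, smul_eq_mul]
        _ ≤ ∑ a' ∈ good, (S.filter (fun x => r 0 x ∉
              Submodule.span K (Set.range (fun j => r' j (a' j))))).card :=
            Finset.sum_le_sum hbound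
    refine le_trans hSigcard (Finset.card_le_card_of_injOn (fun p => (Fin.cons p.2 p.1 : Fin (t+1) → K)) ?_ ?_)
    · rintro ⟨a', x⟩ hp
      rw [Finset.mem_coe, hSig, Finset.mem_sigma] at hp
      obtain ⟨ha', hx⟩ := hp
      rw [hgood, Finset.mem_filter] at ha'
      rw [Finset.mem_filter] at hx
      have hfam : (fun i : Fin (t+1) => r i (Fin.cons (α := fun _ => K) x a' i))
          = Fin.cons (α := fun _ => (Fin n → K)) (r 0 x) (fun j => r' j (a' j)) := by
        funext i
        refine Fin.cases ?_ (fun j => ?_) i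
        · simp
        · simp [hr']
      refine Finset.mem_filter.2 ⟨?_, ?_⟩
      · refine Fintype.mem_piFinset.2 (fun i => ?_)
        refine Fin.cases ?_ (fun j => ?_) i
        · simpa using hx.1
        · simpa using Fintype.mem_piFinset.1 ha'.1 j
      · rw [hfam, linearIndependent_fin_cons]
        exact ⟨ha'.2, hx.2⟩
    · rintro ⟨a', x⟩ _ ⟨b', y⟩ _ h
      have hx : x = y := by
        have := congrFun h 0
        simpa using this
      have ha : a' = b' := by
        funext j
        have := congrFun h j.succ
        simpa using this
      subst hx; subst ha; rfl

theorem stmt15 (K : Type*) [Field K] [CharZero K] (s : ℕ)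
    (e : Fin s → ℕ) (hanti : Antitone e)
    (hpolya : ∀ i : ℕ, (Finset.univ.filter (fun j => e j < i)).card ≤ i)
    (S : Finset K) (hS : S.Nonempty) :
    (1 - (s * (s - 1) : ℝ) / S.card) ≤
      ((Fintype.piFinset (fun _ : Fin s => S)).filter
          (fun a => LinearIndependent K
            (fun i : Fin s => (X - C (a i)) ^ (e i)))).card /
        ((Fintype.piFinset (fun _ : Fin s => S)).card : ℝ) := by
  have hN0 : 0 < S.card := hS.card_pos
  rcases Nat.eq_zero_or_pos s with hs0 | hs1
  · subst hs0
    have hfe : ((Fintype.piFinset (fun _ : Fin 0 => S)).filter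
        (fun a => LinearIndependent K (fun i : Fin 0 => (X - C (a i)) ^ (e i))))
        = Fintype.piFinset (fun _ : Fin 0 => S) :=
      Finset.filter_true_of_mem (fun a _ => linearIndependent_empty_type)
    rw [hfe]
    have hne : ((Fintype.piFinset (fun _ : Fin 0 => S)).card : ℝ) ≠ 0 := by
      simp [Fintype.card_piFinset]
    rw [div_self hne]
    norm_num
  -- setup
  obtain ⟨t₀, ht₀⟩ := Infinite.exists_notMem_finset S
  set m : Fin s → ℕ := fun i => min (e i) (s - 1) with hm_def
  have hpol : ∀ i : Fin s, s - 1 - (i : ℕ) ≤ e i := by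
    intro i
    have hsub : Finset.univ.filter (fun j : Fin s => (i : Fin s) ≤ j) ⊆
        Finset.univ.filter (fun j => e j < e i + 1) := by
      intro j hj
      simp only [Finset.mem_filter, Finset.mem_univ, true_and] at hj ⊢
      exact Nat.lt_succ_of_le (hanti hj)
    have hcard : (Finset.univ.filter (fun j : Fin s => (i : Fin s) ≤ j)).card = s - (i : ℕ) := by
      have heq : Finset.univ.filter (fun j : Fin s => (i : Fin s) ≤ j) = Finset.Ici i := by
        ext j; simp
      rw [heq, Fin.card_Ici]
    have h5 := le_trans (le_of_eq hcard.symm) (le_trans (Finset.card_le_card hsub) (hpolya (e i + 1)))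
    have hi := i.2
    omega
  have hm_pol : ∀ i : Fin s, s - 1 - (i : ℕ) ≤ m i := by
    intro i
    have hi := i.2
    have := hpol i
    simp only [hm_def, le_min_iff]
    omega
  have hm_le : ∀ i : Fin s, m i ≤ e i := fun i => min_le_left _ _
  have hm_lt : ∀ i : Fin s, m i < s := by
    intro i
    have := hs1
    simp only [hm_def]
    omega
  set r : Fin s → K → (Fin s → K) := fun i x k =>
    (Nat.descFactorial (e i) (k : ℕ) : K) * (t₀ - x) ^ (m i - (k : ℕ)) with hr_def
  have hdesc0 : ∀ (i k : Fin s), m i < (k : ℕ) →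
      (Nat.descFactorial (e i) (k : ℕ) : K) = 0 := by
    intro i k hk
    have hk2 := k.2
    have hlt : e i < (k : ℕ) := by
      simp only [hm_def] at hk; omega
    rw [Nat.descFactorial_eq_zero_iff_lt.2 hlt]
    simp
  -- the root-counting hypothesis
  have Hcond : ∀ (i : Fin s) (W : Finset (Fin s → K)), W.card + (i : ℕ) + 1 ≤ s →
      (S.filter (fun x => r i x ∈ Submodule.span K (W : Set (Fin s → K)))).card ≤ s - 1 := by
    intro i W hW
    set M : Matrix W (Fin s) K := Matrix.of (fun v k => (v : Fin s → K) k) with hM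
    set Φ := M.mulVecLin with hΦ
    have hkerΦ : s - W.card ≤ Module.finrank K (LinearMap.ker Φ) := by
      have h1 := LinearMap.finrank_range_add_finrank_ker Φ
      have h2 : Module.finrank K (LinearMap.range Φ) ≤ W.card := by
        refine le_trans (Submodule.finrank_le _) ?_
        simp [Module.finrank_fintype_fun_eq_card]
      have h3 : Module.finrank K (Fin s → K) = s := by
        simp [Module.finrank_fintype_fun_eq_card]
      omega
    have hmi1 : m i + 1 ≤ s := hm_lt i
    set Ψ : (Fin s → K) →ₗ[K] (Fin (m i + 1) → K) :=
      LinearMap.funLeft K K (fun k => Fin.castLE hmi1 k) with hΨ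
    have hΨsurj : Function.Surjective Ψ :=
      LinearMap.funLeft_surjective_of_injective K K _ (Fin.castLE_injective hmi1)
    have hkerΨ : Module.finrank K (LinearMap.ker Ψ) = s - (m i + 1) := by
      have h1 := LinearMap.finrank_range_add_finrank_ker Ψ
      rw [LinearMap.range_eq_top.2 hΨsurj] at h1
      have h3 : Module.finrank K (Fin s → K) = s := by
        simp [Module.finrank_fintype_fun_eq_card]
      have h4 : Module.finrank K (⊤ : Submodule K (Fin (m i + 1) → K)) = m i + 1 := by
        simp [Module.finrank_fintype_fun_eq_card]
      omega
    have hne : ¬ (LinearMap.ker Φ ≤ LinearMap.ker Ψ) := by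
      intro hle
      have hmono := Submodule.finrank_mono hle
      have hmp := hm_pol i
      have hi2 := i.2
      omega
    obtain ⟨lam, hlamΦ, hlamΨ⟩ : ∃ lam, lam ∈ LinearMap.ker Φ ∧ lam ∉ LinearMap.ker Ψ := by
      by_contra h
      push_neg at h
      exact hne h
    obtain ⟨k₁, hk₁⟩ : ∃ k : Fin (m i + 1), lam (Fin.castLE hmi1 k) ≠ 0 := by
      by_contra h
      push_neg at h
      refine hlamΨ (LinearMap.mem_ker.2 (funext fun k => ?_))
      simpa [hΨ, LinearMap.funLeft_apply] using h k
    set k₀ : Fin s := Fin.castLE hmi1 k₁ with hk₀def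
    have hk₀m : (k₀ : ℕ) ≤ m i := by
      have := k₁.2
      simp only [hk₀def, Fin.coe_castLE]
      omega
    set l : (Fin s → K) →ₗ[K] K := ∑ k : Fin s, lam k • LinearMap.proj k with hl
    have hlapply : ∀ u : Fin s → K, l u = ∑ k : Fin s, lam k * u k := by
      intro u
      simp [hl, LinearMap.sum_apply, LinearMap.smul_apply, smul_eq_mul]
    have hspan : Submodule.span K (W : Set (Fin s → K)) ≤ LinearMap.ker l := by
      rw [Submodule.span_le]
      intro v hv
      simp only [SetLike.mem_coe, LinearMap.mem_ker]
      rw [hlapply]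
      have hcf := congrFun (LinearMap.mem_ker.1 hlamΦ) ⟨v, hv⟩
      simp only [hΦ, Matrix.mulVecLin_apply, Matrix.mulVec, dotProduct, hM,
        Matrix.of_apply, Pi.zero_apply] at hcf
      rw [← hcf]
      exact Finset.sum_congr rfl (fun k _ => mul_comm _ _)
    set q : K[X] := ∑ k : Fin s,
      C (lam k * (Nat.descFactorial (e i) (k : ℕ) : K)) * (C t₀ - X) ^ (m i - (k : ℕ)) with hq
    have heval : ∀ x : K, q.eval x = ∑ k : Fin s, lam k * r i x k := by
      intro x
      simp [hq, eval_finset_sum, hr_def, mul_assoc]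
    have hq0 : q ≠ 0 := by
      intro h0
      have hcomp : (0 : K[X]).comp (C t₀ - X) = q.comp (C t₀ - X) := by rw [h0]
      rw [hq] at hcomp
      simp only [Polynomial.zero_comp, Polynomial.sum_comp, Polynomial.mul_comp,
        Polynomial.C_comp, Polynomial.pow_comp, Polynomial.sub_comp, Polynomial.X_comp,
        sub_sub_cancel] at hcomp
      have hco := congrArg (fun p : K[X] => p.coeff (m i - (k₀ : ℕ))) hcomp
      simp only [Polynomial.coeff_zero, Polynomial.finset_sum_coeff,
        Polynomial.coeff_C_mul, Polynomial.coeff_X_pow, mul_ite, mul_one, mul_zero] at hco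
      rw [Finset.sum_eq_single k₀] at hco
      · rw [if_pos rfl] at hco
        have hd : (Nat.descFactorial (e i) (k₀ : ℕ) : K) ≠ 0 := by
          rw [Nat.cast_ne_zero, Ne, Nat.descFactorial_eq_zero_iff_lt]
          have := hm_le i
          omega
        have : lam k₀ = 0 := by
          rcases mul_eq_zero.1 hco.symm with h | h
          · exact h
          · exact absurd h hd
        exact hk₁ this
      · intro k _ hkne
        by_cases hif : m i - (k₀ : ℕ) = m i - (k : ℕ)
        · rcases le_or_gt (k : ℕ) (m i) with hkm | hkm
          · exfalso
            apply hkne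
            have : (k : ℕ) = (k₀ : ℕ) := by omega
            exact Fin.ext this
          · rw [hdesc0 i k hkm, mul_zero]
            simp
        · rw [if_neg hif]
      · intro hk₀mem
        exact absurd (Finset.mem_univ k₀) hk₀mem
    have hdeg : q.natDegree ≤ s - 1 := by
      refine le_trans (Polynomial.natDegree_sum_le _ _) ?_
      rw [Finset.fold_max_le]
      refine ⟨by omega, fun k _ => ?_⟩
      refine le_trans (Polynomial.natDegree_mul_le) ?_
      have h1 : (C (lam k * (Nat.descFactorial (e i) (k:ℕ) : K))).natDegree = 0 :=
        Polynomial.natDegree_C _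
      have h2 : ((C t₀ - X : K[X]) ^ (m i - (k:ℕ))).natDegree ≤ m i - (k:ℕ) := by
        refine le_trans (Polynomial.natDegree_pow_le) ?_
        have h3 : (C t₀ - X : K[X]).natDegree ≤ 1 := by
          refine le_trans (Polynomial.natDegree_sub_le _ _) ?_
          simp
        calc (m i - (k:ℕ)) * (C t₀ - X : K[X]).natDegree ≤ (m i - (k:ℕ)) * 1 :=
              Nat.mul_le_mul_left _ h3
          _ = m i - (k:ℕ) := Nat.mul_one _
      have h5 := hm_lt i
      omega
    have hss : S.filter (fun x => r i x ∈ Submodule.span K (W : Set (Fin s → K)))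
        ⊆ q.roots.toFinset := by
      intro x hx
      rw [Finset.mem_filter] at hx
      rw [Multiset.mem_toFinset, Polynomial.mem_roots hq0]
      have h6 : l (r i x) = 0 := hspan hx.2
      rw [hlapply] at h6
      rw [Polynomial.IsRoot, heval, h6]
    calc (S.filter _).card ≤ q.roots.toFinset.card := Finset.card_le_card hss
      _ ≤ Multiset.card q.roots := Multiset.toFinset_card_le _
      _ ≤ q.natDegree := Polynomial.card_roots' q
      _ ≤ s - 1 := hdeg
  have hcount := count_lemma s S (s - 1) s r Hcond
  -- rows independent implies polynomials independent
  have hsub : ((Fintype.piFinset (fun _ : Fin s => S)).filter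
        (fun a => LinearIndependent K (fun i => r i (a i)))) ⊆
      ((Fintype.piFinset (fun _ : Fin s => S)).filter
        (fun a => LinearIndependent K (fun i : Fin s => (X - C (a i)) ^ (e i)))) := by
    intro a ha
    rw [Finset.mem_filter] at ha
    obtain ⟨haS, hrows⟩ := ha
    have hta : ∀ i : Fin s, t₀ - a i ≠ 0 := by
      intro i
      have : a i ∈ S := Fintype.mem_piFinset.1 haS i
      exact sub_ne_zero.2 (fun h => ht₀ (h ▸ this))
    refine Finset.mem_filter.2 ⟨haS, ?_⟩
    rw [Fintype.linearIndependent_iff]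
    intro g hg
    set g' : Fin s → K := fun i => g i * (t₀ - a i) ^ (e i - m i) with hg'
    have hder : ∀ k : Fin s, ∑ i, g i *
        ((Nat.descFactorial (e i) (k : ℕ) : K) * (t₀ - a i) ^ (e i - (k : ℕ))) = 0 := by
      intro k
      have hx := congrArg (fun p : K[X] => Polynomial.eval t₀ (Polynomial.derivative^[(k : ℕ)] p)) hg
      simp only [Polynomial.iterate_derivative_zero, Polynomial.eval_zero,
        Polynomial.iterate_derivative_sum, Polynomial.iterate_derivative_smul,
        Polynomial.iterate_derivative_X_sub_pow, Polynomial.eval_finset_sum,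
        Polynomial.eval_smul, smul_eq_mul, nsmul_eq_mul, Polynomial.eval_mul,
        Polynomial.eval_natCast, Polynomial.eval_pow, Polynomial.eval_sub,
        Polynomial.eval_X, Polynomial.eval_C] at hx
      rw [← hx]
    have hzero : ∑ i, g' i • r i (a i) = 0 := by
      funext k
      simp only [Finset.sum_apply, Pi.smul_apply, smul_eq_mul, Pi.zero_apply]
      rw [← hder k]
      refine Finset.sum_congr rfl (fun i _ => ?_)
      simp only [hg', hr_def]
      rcases le_or_gt (k : ℕ) (m i) with hkm | hkm
      · have hpow : (t₀ - a i) ^ (e i - m i) * (t₀ - a i) ^ (m i - (k : ℕ))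
            = (t₀ - a i) ^ (e i - (k : ℕ)) := by
          rw [← pow_add]
          congr 1
          exact Nat.sub_add_sub_cancel (hm_le i) hkm
        rw [← hpow]
        ring
      · rw [hdesc0 i k hkm]
        ring
    have hg'0 := Fintype.linearIndependent_iff.1 hrows g' hzero
    intro i
    have := hg'0 i
    simp only [hg'] at this
    rcases mul_eq_zero.1 this with h | h
    · exact h
    · exact absurd h (pow_ne_zero _ (hta i))
  -- arithmetic
  have hcardpi : (Fintype.piFinset (fun _ : Fin s => S)).card = S.card ^ s := by
    simp [Fintype.card_piFinset]
  have hBA := le_trans hcount (Finset.card_le_card hsub)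
  set A := ((Fintype.piFinset (fun _ : Fin s => S)).filter
      (fun a => LinearIndependent K (fun i : Fin s => (X - C (a i)) ^ (e i)))).card with hA
  set N := S.card with hNdef
  by_cases hbig : (N : ℝ) ≤ (s : ℝ) * ((s : ℝ) - 1)
  · have h1 : 1 - (s * (s - 1) : ℝ) / N ≤ 0 := by
      rw [sub_nonpos]
      rw [le_div_iff₀ (by exact_mod_cast hN0)]
      linarith
    refine le_trans h1 (div_nonneg (Nat.cast_nonneg _) (Nat.cast_nonneg _))
  · push_neg at hbig
    have hsR : (1 : ℝ) ≤ (s : ℝ) := by exact_mod_cast hs1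
    have hcast1 : ((s - 1 : ℕ) : ℝ) = (s : ℝ) - 1 := by
      have : 1 ≤ s := hs1
      push_cast [this]
      ring
    have hs1N : (s - 1 : ℕ) ≤ N := by
      have h2 : (s : ℝ) - 1 ≤ (s : ℝ) * ((s : ℝ) - 1) := by nlinarith
      have h3 : ((s - 1 : ℕ) : ℝ) < (N : ℝ) := by rw [hcast1]; linarith
      exact_mod_cast h3.le
    have hNcast : ((N - (s - 1) : ℕ) : ℝ) = (N : ℝ) - ((s : ℝ) - 1) := by
      push_cast [hs1N]
      rw [hcast1]
    have hNpos : (0 : ℝ) < N := by exact_mod_cast hN0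
    set c : ℝ := (s : ℝ) - 1 with hc
    have hc0 : 0 ≤ c := by linarith
    have hcN : c ≤ (N : ℝ) := by nlinarith
    have hbern : (N : ℝ) ^ s * (1 - (s : ℝ) * c / N) ≤ ((N : ℝ) - c) ^ s := by
      have hx : (-2 : ℝ) ≤ -(c / N) := by
        have : c / N ≤ 1 := (div_le_one hNpos).2 hcN
        linarith
      have hb := one_add_mul_le_pow hx s
      have h1x : (1 : ℝ) + -(c / N) = ((N : ℝ) - c) / N := by
        field_simp
        ring
      rw [h1x] at hb
      have h2 : (1 : ℝ) + (s : ℝ) * -(c / N) = 1 - (s : ℝ) * c / N := by ring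
      rw [h2] at hb
      calc (N : ℝ) ^ s * (1 - (s : ℝ) * c / N) ≤ (N : ℝ) ^ s * (((N : ℝ) - c) / N) ^ s :=
            mul_le_mul_of_nonneg_left hb (le_of_lt (pow_pos hNpos s))
        _ = ((N : ℝ) - c) ^ s := by
            rw [div_pow, mul_comm, div_mul_cancel₀ _ (ne_of_gt (pow_pos hNpos s))]
    have hAineq : ((N : ℝ) - c) ^ s ≤ (A : ℝ) := by
      have : (((N - (s - 1) : ℕ) ^ s : ℕ) : ℝ) ≤ (A : ℝ) := by exact_mod_cast hBA
      rw [Nat.cast_pow, hNcast] at this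
      exact this
    rw [hcardpi]
    have hfinal : 1 - (s : ℝ) * c / N ≤ (A : ℝ) / (N : ℝ) ^ s := by
      rw [le_div_iff₀ (pow_pos hNpos s)]
      calc (1 - (s : ℝ) * c / N) * (N : ℝ) ^ s = (N : ℝ) ^ s * (1 - (s : ℝ) * c / N) := by ring
        _ ≤ ((N : ℝ) - c) ^ s := hbern
        _ ≤ (A : ℝ) := hAineq
    calc 1 - (s : ℝ) * ((s : ℝ) - 1) / N = 1 - (s : ℝ) * c / N := by rw [hc]
      _ ≤ (A : ℝ) / (N : ℝ) ^ s := hfinal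
      _ = (A : ℝ) / ((N ^ s : ℕ) : ℝ) := by rw [Nat.cast_pow]
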